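/- Let f(x) be a formal power series with f(0) = 1, let c(x) = (f(x) - f(x)⁻¹)/2, and let g(x) with g(0) = ±1 be such that c(x·g(x)) = -c(x). Then f(x·g(x)) = f(x)⁻¹. -/

import Mathlib

open PowerSeries

/-- Substitution of the power series `g` (with zero constant term) into `f`. -/
noncomputable def pscomp (f g : PowerSeries ℚ) : PowerSeries ℚ :=
  PowerSeries.mk fun N => ∑ n ∈ Finset.range (N + 1), coeff n f * coeff N (g ^ n)

namespace PscompAux

lemma coeff_Xg_pow (g : PowerSeries ℚ) {N n : ℕ} (h : N < n) :
    coeff N ((X * g) ^ n) = 0 := by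
  rw [mul_pow, coeff_X_pow_mul', if_neg (by omega)]

/-- Evaluation of a polynomial at `X * g`. -/
noncomputable def E (g : PowerSeries ℚ) : Polynomial ℚ →+* PowerSeries ℚ :=
  Polynomial.eval₂RingHom C (X * g)

lemma coeff_E (g : PowerSeries ℚ) (p : Polynomial ℚ) (N : ℕ) :
    coeff N (E g p) = ∑ i ∈ Finset.range (p.natDegree + 1),
      p.coeff i * coeff N ((X * g) ^ i) := by
  rw [E, Polynomial.coe_eval₂RingHom,
    Polynomial.eval₂_eq_sum_range' C (Nat.lt_succ_self _) (X * g), map_sum]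
  exact Finset.sum_congr rfl fun i _ => coeff_C_mul _ _ _

lemma coeff_E_eq_zero (g : PowerSeries ℚ) (p : Polynomial ℚ) (N : ℕ)
    (h : ∀ m ≤ N, p.coeff m = 0) : coeff N (E g p) = 0 := by
  rw [coeff_E]
  refine Finset.sum_eq_zero fun i _ => ?_
  rcases le_or_gt i N with hi | hi
  · rw [h i hi, zero_mul]
  · rw [coeff_Xg_pow g hi, mul_zero]

lemma coeff_E_congr (g : PowerSeries ℚ) (p q : Polynomial ℚ) (N : ℕ)
    (h : ∀ m ≤ N, p.coeff m = q.coeff m) :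
    coeff N (E g p) = coeff N (E g q) := by
  have : coeff N (E g (p - q)) = 0 := by
    refine coeff_E_eq_zero g _ N fun m hm => ?_
    simp [h m hm]
  rw [map_sub, map_sub] at this
  linarith

lemma coeff_E_trunc (g f : PowerSeries ℚ) {N M : ℕ} (hNM : N < M) :
    coeff N (E g (trunc M f)) = coeff N (pscomp f (X * g)) := by
  rw [coeff_E, pscomp, coeff_mk]
  set D := (trunc M f).natDegree + 1 with hD
  set K := max D (N + 1) with hK
  trans (∑ i ∈ Finset.range K, (trunc M f).coeff i * coeff N ((X * g) ^ i))
  · refine Finset.sum_subset (Finset.range_subset_range.mpr (le_max_left _ _)) fun i _ hi => ?_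
    simp only [Finset.mem_range, not_lt] at hi
    rw [Polynomial.coeff_eq_zero_of_natDegree_lt (by omega), zero_mul]
  · rw [show (∑ i ∈ Finset.range K, (trunc M f).coeff i * coeff N ((X * g) ^ i))
        = ∑ i ∈ Finset.range K, coeff i f * coeff N ((X * g) ^ i) from
      Finset.sum_congr rfl fun i _ => by
        rcases le_or_gt i N with hi | hi
        · rw [coeff_trunc, if_pos (by omega)]
        · rw [coeff_Xg_pow g hi, mul_zero, mul_zero]]
    refine (Finset.sum_subset (Finset.range_subset_range.mpr (le_max_right _ _)) fun i _ hi => ?_).symm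
    simp only [Finset.mem_range, not_lt] at hi
    rw [coeff_Xg_pow g (by omega), mul_zero]

lemma pscomp_mul (g a b : PowerSeries ℚ) :
    pscomp (a * b) (X * g) = pscomp a (X * g) * pscomp b (X * g) := by
  ext N
  rw [← coeff_E_trunc g (a * b) (Nat.lt_succ_self N)]
  have h1 : coeff N (E g (trunc (N + 1) (a * b)))
      = coeff N (E g (trunc (N + 1) a * trunc (N + 1) b)) := by
    refine coeff_E_congr g _ _ N fun m hm => ?_
    rw [coeff_trunc, if_pos (Nat.lt_succ_of_le hm)]
    have := coeff_mul_eq_coeff_trunc_mul_trunc a b (Nat.lt_succ_of_le hm)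
    rw [this, ← Polynomial.coe_mul, Polynomial.coeff_coe]
  rw [h1, map_mul]
  rw [coeff_mul, coeff_mul]
  refine Finset.sum_congr rfl fun ij hij => ?_
  have hij' := Finset.HasAntidiagonal.mem_antidiagonal.mp hij
  rw [coeff_E_trunc g a (by omega), coeff_E_trunc g b (by omega)]

lemma pscomp_one (g : PowerSeries ℚ) : pscomp 1 (X * g) = 1 := by
  ext N
  rw [pscomp, coeff_mk]
  rw [Finset.sum_eq_single 0]
  · simp [coeff_one]
  · intro n _ hn
    rw [coeff_one, if_neg hn, zero_mul]
  · intro h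
    simp at h

lemma pscomp_add (g a b : PowerSeries ℚ) :
    pscomp (a + b) (X * g) = pscomp a (X * g) + pscomp b (X * g) := by
  ext N
  simp [pscomp, add_mul, Finset.sum_add_distrib]

lemma pscomp_sub (g a b : PowerSeries ℚ) :
    pscomp (a - b) (X * g) = pscomp a (X * g) - pscomp b (X * g) := by
  ext N
  simp [pscomp, sub_mul, Finset.sum_sub_distrib]

lemma pscomp_constantCoeff (g f : PowerSeries ℚ) :
    constantCoeff (pscomp f (X * g)) = constantCoeff f := by
  have h : coeff 0 (pscomp f (X * g)) = coeff 0 f := by simp [pscomp]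
  simpa [coeff_zero_eq_constantCoeff] using h

end PscompAux

theorem stmt_3 (f c g : PowerSeries ℚ) (hf : constantCoeff f = 1)
    (hc : (2 : PowerSeries ℚ) * c = f - f⁻¹)
    (hg : constantCoeff g = 1 ∨ constantCoeff g = -1)
    (hcomp : pscomp c (X * g) = -c) :
    pscomp f (X * g) = f⁻¹ := by
  have hfu : f * f⁻¹ = 1 := PowerSeries.mul_inv_cancel f (by rw [hf]; norm_num)
  set F := pscomp f (X * g) with hF
  set u := f⁻¹ with hu
  -- key identity : f * f - 1 = (2 * c) * f
  have key : f * f - 1 = (c + c) * f := by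
    rw [← two_mul, hc]
    linear_combination hfu
  -- apply pscomp
  have hkey : F * F - 1 = (-c + -c) * F := by
    have := congrArg (fun z => pscomp z (X * g)) key
    simpa [PscompAux.pscomp_mul, PscompAux.pscomp_sub, PscompAux.pscomp_add,
      PscompAux.pscomp_one, hcomp, ← hF] using this
  have hF2 : F * F - 1 + (2 * c) * F = 0 := by
    rw [hkey]; ring
  have hu2 : u * u - 1 + (2 * c) * u = 0 := by
    rw [hc]
    linear_combination hfu
  have hfac : (F - u) * (F + u + 2 * c) = 0 := by
    linear_combination hF2 - hu2
  have hsum : F + u + 2 * c = F + f := by rw [hc]; ring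
  rw [hsum] at hfac
  have hne : F + f ≠ 0 := by
    intro h0
    have := congrArg (constantCoeff) h0
    rw [map_add, PscompAux.pscomp_constantCoeff, hf, map_zero] at this
    norm_num at this
  have := mul_eq_zero.mp hfac
  rcases this with h | h
  · exact sub_eq_zero.mp h
  · exact absurd h hne
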